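/- arXiv:math/9812138 — 2 statements merged into one kernel-verified Lean document; each statement's English description precedes it below -/
import Mathlib

section
/- Suppose ρ_j ∈ (0,1) for j ∈ ℕ, ∑_{j=1}^∞ ρ_j^{s} = 1 for some finite s > 0, and for each m ≥ 1 (with ∑_{j=1}^m ρ_j^{s^(m)} = 1 defining s^(m) when ρ_1^0 + ... ≥ 1, i.e. m ≥ 2) let s^(m) be the unique solution of ∑_{j=1}^m ρ_j^{s^(m)} = 1. Then the sequence s^(m) is nondecreasing and lim_{m→∞} s^(m) = s. -/
open Filter Finset

/-- If `∑' j, (ρ j)^s = 1` for a finite `s > 0` and `sm m` is the unique solution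
of `∑_{j<m} (ρ j)^(sm m) = 1` (for `m ≥ 2`), then `sm` is nondecreasing and
`sm m → s` as `m → ∞`. -/
theorem stmt4 (ρ : ℕ → ℝ) (hρ : ∀ j, ρ j ∈ Set.Ioo (0 : ℝ) 1)
    (s : ℝ) (hs : 0 < s) (hsum : ∑' j, ρ j ^ s = 1)
    (sm : ℕ → ℝ) (hsm0 : ∀ m, 2 ≤ m → 0 ≤ sm m)
    (hsmeq : ∀ m, 2 ≤ m → ∑ j ∈ Finset.range m, ρ j ^ sm m = 1) :
    (∀ m n, 2 ≤ m → m ≤ n → sm m ≤ sm n) ∧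
      Tendsto sm atTop (nhds s) := by
  have hpos : ∀ (j : ℕ) (t : ℝ), 0 < ρ j ^ t := fun j t => Real.rpow_pos_of_pos (hρ j).1 t
  have hanti : ∀ (m : ℕ) (a b : ℝ), a ≤ b →
      ∑ j ∈ Finset.range m, ρ j ^ b ≤ ∑ j ∈ Finset.range m, ρ j ^ a := by
    intro m a b hab
    exact Finset.sum_le_sum fun j _ =>
      Real.rpow_le_rpow_of_exponent_ge (hρ j).1 (hρ j).2.le hab
  have hstrict : ∀ (m : ℕ), 1 ≤ m → ∀ (a b : ℝ), a < b →
      ∑ j ∈ Finset.range m, ρ j ^ b < ∑ j ∈ Finset.range m, ρ j ^ a := by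
    intro m hm a b hab
    refine Finset.sum_lt_sum_of_nonempty (by simp; omega) ?_
    intro j _
    exact Real.rpow_lt_rpow_of_exponent_gt (hρ j).1 (hρ j).2 hab
  have hsummable : Summable fun j => ρ j ^ s := by
    by_contra h
    rw [tsum_eq_zero_of_not_summable h] at hsum
    norm_num at hsum
  have hle : ∀ m, 2 ≤ m → sm m ≤ s := by
    intro m hm
    by_contra h
    push_neg at h
    have h1 : ∑ j ∈ Finset.range m, ρ j ^ s ≤ 1 := by
      rw [← hsum]
      exact Summable.sum_le_tsum _ (fun j _ => (hpos j s).le) hsummable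
    have h2 := hstrict m (by omega) s (sm m) h
    rw [hsmeq m hm] at h2
    linarith
  have hmono : ∀ m n, 2 ≤ m → m ≤ n → sm m ≤ sm n := by
    intro m n hm hmn
    by_contra h
    push_neg at h
    have h1 : ∑ j ∈ Finset.range m, ρ j ^ sm m ≤ ∑ j ∈ Finset.range n, ρ j ^ sm m :=
      Finset.sum_le_sum_of_subset_of_nonneg (Finset.range_subset_range.2 hmn)
        (fun j _ _ => (hpos j _).le)
    have h2 := hstrict n (by omega) (sm n) (sm m) h
    rw [hsmeq m hm] at h1
    rw [hsmeq n (by omega)] at h2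
    linarith
  refine ⟨hmono, ?_⟩
  rw [tendsto_order]
  constructor
  · intro a ha
    have hterm : ∀ j, ρ j ^ s < ρ j ^ a := fun j =>
      Real.rpow_lt_rpow_of_exponent_gt (hρ j).1 (hρ j).2 ha
    have hev : ∀ᶠ m in atTop, 1 < ∑ j ∈ Finset.range m, ρ j ^ a := by
      by_cases hS : Summable fun j => ρ j ^ a
      · have hlt : (1 : ℝ) < ∑' j, ρ j ^ a := by
          rw [← hsum]
          exact Summable.tsum_lt_tsum (fun j => (hterm j).le) (hterm 0) hsummable hS
        exact hS.hasSum.tendsto_sum_nat.eventually (eventually_gt_nhds hlt)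
      · have h2 := (not_summable_iff_tendsto_nat_atTop_of_nonneg
          (fun j => (hpos j a).le)).1 hS
        exact h2.eventually_gt_atTop 1
    filter_upwards [hev, eventually_ge_atTop 2] with m h1 h2
    by_contra h
    push_neg at h
    have h3 := hanti m (sm m) a h
    rw [hsmeq m h2] at h3
    linarith
  · intro a ha
    filter_upwards [eventually_ge_atTop 2] with m hm
    exact lt_of_le_of_lt (hle m hm) ha
end

section
/- Let (P_j) be a probability sequence and ρ_j ∈ (0,1) with β > 0 and ∑_{j=1}^∞ P_j^2 ρ_j^{-β} = 1. Then for every 0 < t < 1 the stopping family Λ(t) = {J : ρ_J < t ≤ ρ_{parent(J)}} satisfies ∑_{J∈Λ(t)} P_J^2 ρ_J^{-β} = 1. -/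
open MeasureTheory Set ENNReal

/-- The stopping-time family `Λ(t)`: nonempty multi-indices whose contraction ratio
first drops below `t` at the last step. -/
def stopFamily (ρ : ℕ → ℝ) (t : ℝ) : Set (List ℕ) :=
  {J | J ≠ [] ∧ (J.map ρ).prod < t ∧ t ≤ (J.dropLast.map ρ).prod}

namespace Stmt11Aux

/-- Append-last equivalence between `List ℕ × ℕ` and nonempty lists. -/
def consEquiv : List ℕ × ℕ ≃ {K : List ℕ // K ≠ []} where
  toFun p := ⟨p.1 ++ [p.2], by simp⟩
  invFun K := (K.1.dropLast, K.1.getLast K.2)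
  left_inv p := by simp
  right_inv K := by
    ext : 1
    exact List.dropLast_append_getLast K.2

lemma tsum_shift (g : List ℕ → ℝ≥0∞) (h0 : g [] = 0) :
    ∑' K : List ℕ, g K = ∑' J : List ℕ, ∑' j : ℕ, g (J ++ [j]) := by
  have h1 : ∑' K : {K : List ℕ // K ≠ []}, g ↑K = ∑' K : List ℕ, g K := by
    apply tsum_subtype_eq_of_support_subset
    intro K hK
    simp only [Function.mem_support] at hK
    intro h
    exact hK (h ▸ h0)
  rw [← h1, ← Equiv.tsum_eq consEquiv (fun K => g ↑K)]
  exact ENNReal.tsum_prod (f := fun J j => g (J ++ [j]))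

end Stmt11Aux

/-- If `∑ j, P_j² ρ_j^{-β} = 1`, then for every `0 < t < 1` the stopping family
satisfies `∑_{J ∈ Λ(t)} P_J² ρ_J^{-β} = 1`. -/
theorem stmt11 (P ρ : ℕ → ℝ) (β : ℝ) (hβ : 0 < β)
    (hP : ∀ j, 0 ≤ P j) (hPsum : ∑' j, P j = 1)
    (hρ : ∀ j, ρ j ∈ Set.Ioo (0 : ℝ) 1)
    (hsum : ∑' j, ENNReal.ofReal ((P j) ^ 2 * (ρ j) ^ (-β)) = 1)
    (t : ℝ) (ht : t ∈ Set.Ioo (0 : ℝ) 1) :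
    ∑' J : stopFamily ρ t,
      ENNReal.ofReal ((((J : List ℕ).map P).prod) ^ 2 * (((J : List ℕ).map ρ).prod) ^ (-β)) = 1 := by
  classical
  obtain ⟨ht0, ht1⟩ := ht
  set w : List ℕ → ℝ≥0∞ :=
    fun J => ENNReal.ofReal (((J.map P).prod) ^ 2 * ((J.map ρ).prod) ^ (-β)) with hw
  set r : List ℕ → ℝ := fun J => (J.map ρ).prod with hr
  set p : List ℕ → ℝ := fun J => (J.map P).prod with hp
  -- basic positivity
  have hrpos : ∀ J, 0 < r J := fun J =>
    List.prod_pos (by simp only [List.mem_map]; rintro _ ⟨j, -, rfl⟩; exact (hρ j).1)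
  have hppos : ∀ J, 0 ≤ p J :=
    fun J => List.prod_nonneg (by simp only [List.mem_map]; rintro _ ⟨j, -, rfl⟩; exact hP j)
  have hPsummable : Summable P := by
    by_contra h
    rw [tsum_eq_zero_of_not_summable h] at hPsum
    norm_num at hPsum
  -- multiplicativity of w
  have hw_append : ∀ (J : List ℕ) (j : ℕ), w (J ++ [j]) = w J * w [j] := by
    intro J j
    have h1 : p (J ++ [j]) = p J * P j := by simp [hp]
    have h2 : r (J ++ [j]) = r J * ρ j := by simp [hr]
    have h3 : (r J * ρ j) ^ (-β) = r J ^ (-β) * ρ j ^ (-β) :=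
      Real.mul_rpow (le_of_lt (hrpos J)) (le_of_lt (hρ j).1)
    have h4 : w [j] = ENNReal.ofReal (P j ^ 2 * ρ j ^ (-β)) := by simp [hw]
    show ENNReal.ofReal ((p (J ++ [j])) ^ 2 * (r (J ++ [j])) ^ (-β)) = _
    rw [h1, h2, h3, h4, mul_pow]
    rw [show p J ^ 2 * P j ^ 2 * (r J ^ (-β) * ρ j ^ (-β)) =
      (p J ^ 2 * r J ^ (-β)) * (P j ^ 2 * ρ j ^ (-β)) by ring]
    exact ENNReal.ofReal_mul
      (mul_nonneg (sq_nonneg _) (Real.rpow_nonneg (le_of_lt (hrpos J)) _))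
  have hw_single : ∑' j : ℕ, w [j] = 1 := by
    have h : ∀ j : ℕ, w [j] = ENNReal.ofReal (P j ^ 2 * ρ j ^ (-β)) := fun j => by simp [hw]
    rw [tsum_congr h]; exact hsum
  have hw_children : ∀ J : List ℕ, ∑' j : ℕ, w (J ++ [j]) = w J := by
    intro J
    simp only [hw_append]
    rw [ENNReal.tsum_mul_left, hw_single, mul_one]
  have hw_nil : w [] = 1 := by simp [hw]
  -- level sets
  set A : ℕ → Set (List ℕ) := fun n => {J | J.length = n ∧ t ≤ r J} with hA
  set Λ : Set (List ℕ) := stopFamily ρ t with hΛ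
  set S : ℕ → ℝ≥0∞ := fun n => ∑' J : List ℕ, (A n).indicator w J with hS
  set L : ℕ → ℝ≥0∞ := fun n => ∑' J : List ℕ, (Λ ∩ {J | J.length ≤ n}).indicator w J with hL
  have hΛ_mem : ∀ J, J ∈ Λ ↔ J ≠ [] ∧ r J < t ∧ t ≤ r J.dropLast := fun J => Iff.rfl
  have hA_mem : ∀ n J, J ∈ A n ↔ J.length = n ∧ t ≤ r J := fun n J => Iff.rfl
  -- key level identity
  have key : ∀ n, L n + S n = 1 := by
    intro n
    induction n with
    | zero =>
      have hL0 : L 0 = 0 := by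
        show ∑' J : List ℕ, (Λ ∩ {J | J.length ≤ 0}).indicator w J = 0
        refine ENNReal.tsum_eq_zero.2 fun J => ?_
        apply Set.indicator_of_notMem
        rintro ⟨hJ1, hJ2⟩
        exact ((hΛ_mem J).1 hJ1).1 (List.length_eq_zero_iff.1 (Nat.le_zero.1 hJ2))
      have hS0 : S 0 = 1 := by
        show ∑' J : List ℕ, (A 0).indicator w J = 1
        have hA0 : A 0 = {([] : List ℕ)} := by
          ext J
          constructor
          · rintro ⟨h1, -⟩; exact List.length_eq_zero_iff.1 h1
          · rintro rfl
            refine ⟨rfl, ?_⟩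
            show t ≤ r []
            have : r [] = 1 := by simp [hr]
            rw [this]; linarith
        rw [hA0, tsum_eq_single ([] : List ℕ)
          (fun J hJ => Set.indicator_of_notMem (by simpa using hJ) w)]
        rw [Set.indicator_of_mem (Set.mem_singleton _) w, hw_nil]
      rw [hL0, hS0, zero_add]
    | succ n ih =>
      set B : Set (List ℕ) := {K | K ≠ [] ∧ K.dropLast ∈ A n} with hB
      have hBsum : ∑' K : List ℕ, B.indicator w K = S n := by
        rw [Stmt11Aux.tsum_shift (B.indicator w)
          (Set.indicator_of_notMem (by simp [hB]) w)]
        show _ = ∑' J : List ℕ, (A n).indicator w J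
        refine tsum_congr fun J => ?_
        by_cases hJ : J ∈ A n
        · rw [Set.indicator_of_mem hJ w, ← hw_children J]
          refine tsum_congr fun j => ?_
          refine Set.indicator_of_mem ?_ w
          exact ⟨by simp, by simpa using hJ⟩
        · rw [Set.indicator_of_notMem hJ w]
          exact ENNReal.tsum_eq_zero.2 fun j =>
            Set.indicator_of_notMem (fun h => hJ (by simpa using h.2)) w
      have hBsplit : B = A (n+1) ∪ (Λ ∩ {J | J.length = n+1}) := by
        ext K
        simp only [hB, Set.mem_union, Set.mem_inter_iff, Set.mem_setOf_eq, hA_mem]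
        constructor
        · rintro ⟨hK, hlen, hrt⟩
          have hKlen : 0 < K.length := List.length_pos_iff.2 hK
          rw [List.length_dropLast] at hlen
          have hlen' : K.length = n + 1 := by omega
          by_cases h : t ≤ r K
          · exact Or.inl ⟨hlen', h⟩
          · exact Or.inr ⟨(hΛ_mem K).2 ⟨hK, lt_of_not_ge h, hrt⟩, hlen'⟩
        · rintro (⟨hlen, hrt⟩ | ⟨hKΛ, hlen⟩)
          · have hK : K ≠ [] := by
              intro h; rw [h] at hlen; simp at hlen
            refine ⟨hK, by simp [List.length_dropLast, hlen], ?_⟩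
            have hfac : r K = r K.dropLast * ρ (K.getLast hK) := by
              conv_lhs => rw [← List.dropLast_append_getLast hK]
              simp [hr]
            refine le_trans hrt ?_
            rw [hfac]
            calc r K.dropLast * ρ (K.getLast hK) ≤ r K.dropLast * 1 :=
                  mul_le_mul_of_nonneg_left (le_of_lt (hρ _).2) (le_of_lt (hrpos _))
              _ = r K.dropLast := mul_one _
          · obtain ⟨hK, -, hrt⟩ := (hΛ_mem K).1 hKΛ
            exact ⟨hK, by simp [List.length_dropLast, hlen], hrt⟩
      have hBdisj : Disjoint (A (n+1)) (Λ ∩ {J | J.length = n+1}) := by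
        rw [Set.disjoint_left]
        rintro K hKA ⟨hKΛ, -⟩
        exact absurd ((hA_mem _ K).1 hKA).2 (not_le.2 ((hΛ_mem K).1 hKΛ).2.1)
      have hsplit_sum : S n
          = S (n+1) + ∑' K : List ℕ, (Λ ∩ {J | J.length = n+1}).indicator w K := by
        rw [← hBsum, hBsplit]
        show _ = (∑' J : List ℕ, (A (n+1)).indicator w J) + _
        rw [← ENNReal.tsum_add]
        exact tsum_congr fun K => congrFun (Set.indicator_union_of_disjoint hBdisj w) K
      have hLsplit : L (n+1)
          = L n + ∑' K : List ℕ, (Λ ∩ {J | J.length = n+1}).indicator w K := by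
        show ∑' J : List ℕ, (Λ ∩ {J | J.length ≤ n+1}).indicator w J
          = (∑' J : List ℕ, (Λ ∩ {J | J.length ≤ n}).indicator w J) + _
        rw [← ENNReal.tsum_add]
        refine tsum_congr fun K => ?_
        have hU : Λ ∩ {J | J.length ≤ n+1}
            = (Λ ∩ {J | J.length ≤ n}) ∪ (Λ ∩ {J | J.length = n+1}) := by
          ext K
          simp only [Set.mem_inter_iff, Set.mem_union, Set.mem_setOf_eq]
          constructor
          · rintro ⟨h1, h2⟩
            rcases Nat.lt_or_ge K.length (n+1) with h | h
            · exact Or.inl ⟨h1, Nat.lt_succ_iff.1 h⟩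
            · exact Or.inr ⟨h1, le_antisymm h2 h⟩
          · rintro (⟨h1, h2⟩ | ⟨h1, h2⟩)
            · exact ⟨h1, le_trans h2 (Nat.le_succ n)⟩
            · exact ⟨h1, le_of_eq h2⟩
        have hdisj : Disjoint (Λ ∩ {J | J.length ≤ n}) (Λ ∩ {J | J.length = n+1}) := by
          rw [Set.disjoint_left]
          rintro K ⟨-, h1⟩ ⟨-, h2⟩
          simp only [Set.mem_setOf_eq] at h1 h2
          omega
        rw [hU]
        exact congrFun (Set.indicator_union_of_disjoint hdisj w) K
      calc L (n+1) + S (n+1)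
          = L n + (∑' K : List ℕ, (Λ ∩ {J | J.length = n+1}).indicator w K + S (n+1)) := by
            rw [hLsplit]; ring
        _ = L n + S n := by rw [hsplit_sum]; ring
        _ = 1 := ih
  -- sums of products of P over fixed length
  have hp_append : ∀ (J : List ℕ) (j : ℕ),
      ENNReal.ofReal (p (J ++ [j])) = ENNReal.ofReal (p J) * ENNReal.ofReal (P j) := by
    intro J j
    have h1 : p (J ++ [j]) = p J * P j := by simp [hp]
    rw [h1, ENNReal.ofReal_mul (hppos J)]
  have hPone : ∑' j : ℕ, ENNReal.ofReal (P j) = 1 := by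
    rw [← ENNReal.ofReal_tsum_of_nonneg hP hPsummable, hPsum, ENNReal.ofReal_one]
  have hPn : ∀ n : ℕ,
      ∑' J : List ℕ, ({J : List ℕ | J.length = n}).indicator
        (fun J => ENNReal.ofReal (p J)) J = 1 := by
    intro n
    induction n with
    | zero =>
      have hA0 : {J : List ℕ | J.length = 0} = {([] : List ℕ)} := by
        ext J; simp [List.length_eq_zero_iff]
      rw [hA0, tsum_eq_single ([] : List ℕ)
        (fun J hJ => Set.indicator_of_notMem (by simpa using hJ) _)]
      rw [Set.indicator_of_mem (Set.mem_singleton _)]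
      have : p [] = 1 := by simp [hp]
      rw [this, ENNReal.ofReal_one]
    | succ n ih =>
      rw [Stmt11Aux.tsum_shift _ (Set.indicator_of_notMem (by simp) _)]
      rw [← ih]
      refine tsum_congr fun J => ?_
      by_cases hJ : J.length = n
      · rw [Set.indicator_of_mem (by exact hJ)]
        have hmem : ∀ j : ℕ, (J ++ [j]) ∈ {J : List ℕ | J.length = n + 1} := by
          intro j; simp [hJ]
        calc ∑' j : ℕ, ({J : List ℕ | J.length = n+1}).indicator
              (fun J => ENNReal.ofReal (p J)) (J ++ [j])
            = ∑' j : ℕ, ENNReal.ofReal (p J) * ENNReal.ofReal (P j) := by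
              refine tsum_congr fun j => ?_
              rw [Set.indicator_of_mem (hmem j), hp_append]
          _ = ENNReal.ofReal (p J) := by rw [ENNReal.tsum_mul_left, hPone, mul_one]
      · rw [Set.indicator_of_notMem (by exact hJ)]
        refine ENNReal.tsum_eq_zero.2 fun j => ?_
        refine Set.indicator_of_notMem ?_ _
        simp only [Set.mem_setOf_eq, List.length_append, List.length_cons]
        simp only [List.length_nil]
        omega
  -- a uniform bound c < 1 on P
  obtain ⟨c, hc0, hc1, hcP⟩ : ∃ c : ℝ, 0 ≤ c ∧ c < 1 ∧ ∀ j, P j ≤ c := by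
    by_cases h : ∃ j, 1/2 < P j
    · obtain ⟨j0, hj0⟩ := h
      have hj0lt1 : P j0 < 1 := by
        by_contra hge
        push_neg at hge
        have hterm : ENNReal.ofReal (P j0 ^ 2 * ρ j0 ^ (-β)) ≤ 1 := by
          rw [← hsum]; exact ENNReal.le_tsum j0
        have hrgt : 1 < ρ j0 ^ (-β) := by
          rw [Real.one_lt_rpow_iff_of_pos (hρ j0).1]
          exact Or.inr ⟨(hρ j0).2, by linarith⟩
        have h1 : (1:ℝ) < P j0 ^ 2 * ρ j0 ^ (-β) := by
          have hsq : (1:ℝ) ≤ P j0 ^ 2 := by nlinarith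
          have hnn : (0:ℝ) ≤ ρ j0 ^ (-β) := Real.rpow_nonneg (le_of_lt (hρ j0).1) _
          nlinarith
        have := ENNReal.one_lt_ofReal.2 h1
        exact absurd hterm (not_le.2 this)
      refine ⟨max (P j0) (1/2), le_trans (by norm_num) (le_max_right _ _),
        max_lt hj0lt1 (by norm_num), fun j => ?_⟩
      by_cases hj : j = j0
      · rw [hj]; exact le_max_left _ _
      · refine le_trans ?_ (le_max_right _ _)
        by_contra hgt
        push_neg at hgt
        have hpair : P j0 + P j ≤ 1 := by
          rw [← hPsum]
          have := Summable.sum_le_tsum ({j0, j} : Finset ℕ)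
            (fun i _ => hP i) hPsummable
          rwa [Finset.sum_pair (Ne.symm hj)] at this
        linarith
    · push_neg at h
      exact ⟨1/2, by norm_num, by norm_num, h⟩
  have hpc : ∀ J : List ℕ, p J ≤ c ^ J.length := by
    intro J
    induction J with
    | nil => simp [hp]
    | cons a l ih =>
      have h1 : p (a :: l) = P a * p l := by simp [hp]
      rw [h1, List.length_cons, pow_succ']
      exact mul_le_mul (hcP a) ih (hppos l) hc0
  -- bound on S n
  have hSle : ∀ n, S n ≤ ENNReal.ofReal (t ^ (-β)) * ENNReal.ofReal c ^ n := by
    intro n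
    show ∑' J : List ℕ, (A n).indicator w J ≤ _
    have hb : ∀ J : List ℕ, (A n).indicator w J
        ≤ ENNReal.ofReal (t ^ (-β)) * ENNReal.ofReal c ^ n *
          ({J : List ℕ | J.length = n}).indicator (fun J => ENNReal.ofReal (p J)) J := by
      intro J
      by_cases hJ : J ∈ A n
      · obtain ⟨hlen, hrt⟩ := (hA_mem n J).1 hJ
        rw [Set.indicator_of_mem hJ w, Set.indicator_of_mem (by exact hlen)]
        have h1 : r J ^ (-β) ≤ t ^ (-β) :=
          Real.rpow_le_rpow_of_nonpos ht0 hrt (neg_nonpos.2 (le_of_lt hβ))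
        have h2 : p J ^ 2 ≤ c ^ n * p J := by
          rw [sq]
          exact mul_le_mul_of_nonneg_right (hlen ▸ hpc J) (hppos J)
        have h3 : p J ^ 2 * r J ^ (-β) ≤ t ^ (-β) * (c ^ n * p J) := by
          rw [mul_comm (t ^ (-β))]
          exact mul_le_mul h2 h1 (Real.rpow_nonneg (le_of_lt (hrpos J)) _)
            (mul_nonneg (pow_nonneg hc0 n) (hppos J))
        calc w J = ENNReal.ofReal (p J ^ 2 * r J ^ (-β)) := rfl
          _ ≤ ENNReal.ofReal (t ^ (-β) * (c ^ n * p J)) := ENNReal.ofReal_le_ofReal h3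
          _ = ENNReal.ofReal (t ^ (-β)) * ENNReal.ofReal c ^ n * ENNReal.ofReal (p J) := by
              rw [ENNReal.ofReal_mul (Real.rpow_nonneg (le_of_lt ht0) _),
                ENNReal.ofReal_mul (pow_nonneg hc0 n), ENNReal.ofReal_pow hc0, mul_assoc]
      · rw [Set.indicator_of_notMem hJ w]
        exact zero_le
    calc ∑' J : List ℕ, (A n).indicator w J
        ≤ ∑' J : List ℕ, ENNReal.ofReal (t ^ (-β)) * ENNReal.ofReal c ^ n *
            ({J : List ℕ | J.length = n}).indicator (fun J => ENNReal.ofReal (p J)) J :=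
          ENNReal.tsum_le_tsum hb
      _ = ENNReal.ofReal (t ^ (-β)) * ENNReal.ofReal c ^ n := by
          rw [ENNReal.tsum_mul_left, hPn n, mul_one]
  -- the target sum
  set T : ℝ≥0∞ := ∑' J : List ℕ, Λ.indicator w J with hT
  have hgoal : (∑' J : ↥Λ,
      ENNReal.ofReal ((((J : List ℕ).map P).prod) ^ 2 * (((J : List ℕ).map ρ).prod) ^ (-β))) = T := by
    rw [hT]
    exact tsum_subtype Λ w
  rw [hgoal]
  -- L n ≤ T and L n ≤ 1
  have hLT : ∀ n, L n ≤ T := by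
    intro n
    refine ENNReal.tsum_le_tsum fun J => ?_
    exact Set.indicator_le_indicator_of_subset Set.inter_subset_left (fun _ => zero_le) J
  have hL1 : ∀ n, L n ≤ 1 := fun n => (key n) ▸ le_self_add
  -- T ≤ 1
  have hT1 : T ≤ 1 := by
    rw [hT, ENNReal.tsum_eq_iSup_sum]
    refine iSup_le fun s => ?_
    set n := s.sup List.length with hn
    calc ∑ J ∈ s, Λ.indicator w J ≤ ∑ J ∈ s, (Λ ∩ {J | J.length ≤ n}).indicator w J := by
          refine Finset.sum_le_sum fun J hJ => ?_
          by_cases hJΛ : J ∈ Λ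
          · rw [Set.indicator_of_mem hJΛ w]
            rw [Set.indicator_of_mem
              (Set.mem_inter hJΛ (Finset.le_sup (f := List.length) hJ)) w]
          · rw [Set.indicator_of_notMem hJΛ w]
            exact zero_le
      _ ≤ L n := ENNReal.sum_le_tsum s
      _ ≤ 1 := hL1 n
  -- S n → 0, so ⨅ n, S n = 0
  have hSinf : ⨅ n, S n = 0 := by
    refine le_antisymm ?_ (zero_le)
    have htends : Filter.Tendsto (fun n => ENNReal.ofReal (t ^ (-β)) * ENNReal.ofReal c ^ n)
        Filter.atTop (nhds 0) := by
      have h1 : Filter.Tendsto (fun n : ℕ => ENNReal.ofReal c ^ n) Filter.atTop (nhds 0) :=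
        ENNReal.tendsto_pow_atTop_nhds_zero_of_lt_one (ENNReal.ofReal_lt_one.2 hc1)
      have := ENNReal.Tendsto.const_mul (a := ENNReal.ofReal (t ^ (-β))) h1 (Or.inr ENNReal.ofReal_ne_top)
      simpa using this
    have hStend : Filter.Tendsto S Filter.atTop (nhds 0) :=
      tendsto_of_tendsto_of_tendsto_of_le_of_le tendsto_const_nhds htends
        (fun n => zero_le) hSle
    refine ENNReal.le_of_forall_pos_le_add fun ε hε _ => ?_
    obtain ⟨N, hN⟩ := ENNReal.tendsto_atTop_zero.mp hStend ε (by exact_mod_cast hε)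
    rw [zero_add]
    exact iInf_le_of_le N (hN N le_rfl)
  -- conclusion
  have h1T : (1:ℝ≥0∞) ≤ T := by
    have h1 : ∀ n, (1:ℝ≥0∞) ≤ T + S n := fun n => by
      rw [← key n]; exact add_le_add_left (hLT n) (S n)
    have h2 : (1:ℝ≥0∞) ≤ ⨅ n, (T + S n) := le_iInf h1
    rwa [← ENNReal.add_iInf, hSinf, add_zero] at h2
  exact le_antisymm hT1 h1T
end
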